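/- For every y ≠ -1, (n+1)(P_{n+1}(y) + P_n(y))/(y + 1) = (P_{n+1}(y) - P_n(y))', where P_j denotes the j-th Legendre polynomial. -/

import Mathlib

open Polynomial

/-- The `n`-th Legendre polynomial via the Rodrigues formula. -/
noncomputable def legendre (n : ℕ) : Polynomial ℝ :=
  C ((2 ^ n * n.factorial : ℝ)⁻¹) * derivative^[n] ((X ^ 2 - 1) ^ n)


private lemma itadd (k : ℕ) (p q : ℝ[X]) :
    derivative^[k] (p + q) = derivative^[k] p + derivative^[k] q :=
  iterate_map_add derivative k p q

private lemma lx (m : ℕ) (g : ℝ[X]) :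
    derivative^[m+1] (X * g) =
      X * derivative^[m+1] g + ((m+1 : ℕ) : ℝ[X]) * derivative^[m] g := by
  induction m generalizing g with
  | zero => simp [derivative_mul]; ring
  | succ m ih =>
    rw [Function.iterate_succ_apply, derivative_mul, derivative_X, one_mul, itadd, ih,
      ← Function.iterate_succ_apply, ← Function.iterate_succ_apply]
    simp only [show (1+m).succ = 2+m from by omega, show m.succ = 1+m from by omega,
      show m+1 = 1+m from by omega, show m+2 = 2+m from by omega]
    push_cast
    ring

private lemma quad (m : ℕ) (g : ℝ[X]) :
    derivative^[m+2] ((X^2-1) * g) =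
      (X^2-1) * derivative^[m+2] g + (2*((m:ℝ[X])+2)) * (X * derivative^[m+1] g)
        + (((m:ℝ[X])+2)*((m:ℝ[X])+1)) * derivative^[m] g := by
  have h1 : derivative (X^2 - 1 : ℝ[X]) = 2 * X := by
    simp [derivative_pow]; exact map_ofNat C 2
  induction m generalizing g with
  | zero =>
    show derivative (derivative ((X^2-1) * g)) = _
    simp [derivative_mul, h1]
    ring
  | succ m ih =>
    have h2 : (2 : ℝ[X]) = C 2 := (map_ofNat C 2).symm
    have L : derivative^[m+2] (X * g) =
        X * derivative^[m+2] g + ((m+2 : ℕ) : ℝ[X]) * derivative^[m+1] g := lx (m+1) g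
    rw [Function.iterate_succ_apply, derivative_mul, h1, mul_assoc, itadd, h2,
      iterate_derivative_C_mul, ← h2, L, ih,
      ← Function.iterate_succ_apply, ← Function.iterate_succ_apply,
      ← Function.iterate_succ_apply]
    simp only [show (1+m).succ = 2+m from by omega, show m.succ = 1+m from by omega,
      show (2+m).succ = 3+m from by omega,
      show m+1 = 1+m from by omega, show m+2 = 2+m from by omega, show m+3=3+m from by omega]
    push_cast
    ring

private lemma dX2 : derivative (X^2 - 1 : ℝ[X]) = 2 * X := by
  simp [derivative_pow]; exact map_ofNat C 2

private lemma df (n : ℕ) :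
    derivative ((X^2-1)^(n+1) : ℝ[X]) = ((2*(n+1):ℕ) : ℝ[X]) * (X * (X^2-1)^n) := by
  rw [derivative_pow, dX2]
  simp only [map_natCast]
  push_cast
  ring_nf

private lemma keyA (n : ℕ) :
    derivative^[n+2] ((X^2-1)^(n+1) : ℝ[X]) =
      (2*((n:ℝ[X])+1)) * (X * derivative^[n+1] ((X^2-1)^n)
        + ((n:ℝ[X])+1) * derivative^[n] ((X^2-1)^n)) := by
  rw [Function.iterate_succ_apply, df, iterate_derivative_natCast_mul, lx n]
  push_cast
  ring

private lemma keyC (n : ℕ) :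
    (X^2-1) * derivative^[n+2] ((X^2-1)^(n+1) : ℝ[X]) =
      (((n:ℝ[X])+1)*((n:ℝ[X])+2)) * derivative^[n] ((X^2-1)^(n+1)) := by
  induction n with
  | zero =>
    have : derivative^[2] ((X^2-1)^1 : ℝ[X]) = derivative (derivative ((X^2-1) : ℝ[X])) := by
      simp
    rw [this, dX2, derivative_mul, derivative_X]
    simp [map_ofNat]
    ring
  | succ m _ =>
    have I : (X^2-1) * derivative ((X^2-1)^(m+2) : ℝ[X])
        = ((2*(m+2):ℕ) : ℝ[X]) * (X * ((X^2-1) * (X^2-1)^(m+1))) := by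
      rw [df (m+1)]
      push_cast
      ring
    have E := congrArg (derivative^[m+2]) I
    rw [quad m, iterate_derivative_natCast_mul] at E
    have L : derivative^[m+2] (X * ((X^2-1) * (X^2-1)^(m+1)))
        = X * derivative^[m+2] ((X^2-1) * (X^2-1)^(m+1))
          + ((m+2 : ℕ) : ℝ[X]) * derivative^[m+1] ((X^2-1) * (X^2-1)^(m+1)) := lx (m+1) _
    rw [L, ← Function.iterate_succ_apply, ← Function.iterate_succ_apply,
      ← Function.iterate_succ_apply] at E
    have hpow : ((X^2-1) * (X^2-1)^(m+1) : ℝ[X]) = (X^2-1)^(m+2) := by ring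
    rw [hpow] at E
    simp only [show (m+1)+1 = m+2 from rfl, show (m+2)+1 = m+3 from rfl,
      show m.succ = m+1 from rfl] at E ⊢
    push_cast at E ⊢
    linear_combination E

private lemma keyStar (n : ℕ) :
    derivative^[n+1] ((X^2-1)^(n+1) : ℝ[X]) =
      2*(X^2-1) * derivative^[n+1] ((X^2-1)^n)
        + (2*((n:ℝ[X])+1)) * (X * derivative^[n] ((X^2-1)^n)) := by
  cases n with
  | zero =>
    simp [dX2, map_ofNat]
    exact one_add_one_eq_two
  | succ m =>
    have hpow : ((X^2-1)^(m+2) : ℝ[X]) = (X^2-1) * (X^2-1)^(m+1) := by ring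
    have Q := quad m ((X^2-1)^(m+1) : ℝ[X])
    have K := keyC m
    rw [← hpow] at Q
    push_cast
    linear_combination Q - K

private lemma crel (n : ℕ) :
    (C ((2^n * n.factorial : ℝ)⁻¹) : ℝ[X])
      = (2*((n:ℝ[X])+1)) * C ((2^(n+1) * (n+1).factorial : ℝ)⁻¹) := by
  have h1 : (2:ℝ)^n ≠ 0 := by positivity
  have h2 : (n.factorial:ℝ) ≠ 0 := by exact_mod_cast n.factorial_pos.ne'
  have h : ((2^n * n.factorial : ℝ))⁻¹
      = (2*((n:ℝ)+1)) * ((2^(n+1) * (n+1).factorial : ℝ))⁻¹ := by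
    rw [Nat.factorial_succ]
    push_cast
    field_simp
    ring
  rw [h, map_mul]
  simp [map_ofNat, map_natCast, map_add, map_one]

private lemma mainpoly (n : ℕ) :
    ((n:ℝ[X])+1) * (legendre (n+1) + legendre n)
      = (X+1) * derivative (legendre (n+1) - legendre n) := by
  unfold legendre
  have e1 : derivative (derivative^[n+1] ((X^2-1)^(n+1) : ℝ[X]))
      = derivative^[n+2] ((X^2-1)^(n+1) : ℝ[X]) :=
    (Function.iterate_succ_apply' derivative (n+1) _).symm
  have e2 : derivative (derivative^[n] ((X^2-1)^n : ℝ[X]))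
      = derivative^[n+1] ((X^2-1)^n : ℝ[X]) :=
    (Function.iterate_succ_apply' derivative n _).symm
  rw [derivative_sub, derivative_C_mul, derivative_C_mul, e1, e2,
    keyA n, keyStar n, crel n]
  ring

theorem legendre_diff_quotient_neg_one (n : ℕ) (y : ℝ) (hy : y ≠ -1) :
    ((n : ℝ) + 1) * ((legendre (n + 1)).eval y + (legendre n).eval y) / (y + 1) =
      (derivative (legendre (n + 1) - legendre n)).eval y := by
  have H := congrArg (eval y) (mainpoly n)
  simp only [eval_mul, eval_add, eval_natCast, eval_one, eval_X] at H
  have hy1 : y + 1 ≠ 0 := fun h => hy (by linarith)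
  rw [div_eq_iff hy1, H]
  ring
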